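/- For every k ≥ 2, the number of copies of the matching M_k in the graph K_{k-1} + (K₂ ∪ I_{k-1}) equals (k-1)!, where I_{k-1} is an independent set on k-1 vertices, K₂ a single edge, and + denotes the join. -/

import Mathlib

open SimpleGraph

/-- The join `G + H` of two graphs: their disjoint union together with all edges between them. -/
def joinG {α β : Type*} (G : SimpleGraph α) (H : SimpleGraph β) : SimpleGraph (α ⊕ β) where
  Adj u v := match u, v with
    | Sum.inl a, Sum.inl b => G.Adj a b
    | Sum.inr a, Sum.inr b => H.Adj a b
    | _, _ => True
  symm := ⟨by
    intro u v h
    cases u <;> cases v <;> first | exact G.adj_symm h | exact H.adj_symm h | trivial⟩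
  loopless := ⟨by
    intro u
    cases u with
    | inl a => exact G.irrefl
    | inr a => exact H.irrefl⟩

/-- The number of matchings of size `k` (sets of `k` pairwise vertex-disjoint edges) in `G`. -/
noncomputable def matchingCount {V : Type*} (G : SimpleGraph V) (k : ℕ) : ℕ :=
  Set.ncard {s : Finset (Sym2 V) | s.card = k ∧ ↑s ⊆ G.edgeSet ∧
    ∀ e ∈ s, ∀ f ∈ s, e ≠ f → ∀ v, v ∈ e → v ∉ f}

section Aux

variable {n : ℕ}

private def e2f {V : Type*} [DecidableEq V] : Sym2 V → Finset V :=
  Sym2.lift ⟨fun a b => {a, b}, fun a b => Finset.pair_comm a b⟩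

private lemma e2f_mk {V : Type*} [DecidableEq V] (a b : V) : e2f s(a, b) = {a, b} := rfl

private lemma mem_e2f {V : Type*} [DecidableEq V] {v : V} {e : Sym2 V} :
    v ∈ e2f e ↔ v ∈ e := by
  induction e using Sym2.ind with
  | _ a b => rw [e2f_mk]; simp [Sym2.mem_iff]

private abbrev Vt (n : ℕ) := Fin n ⊕ (Fin 2 ⊕ Fin n)

private abbrev Gn (n : ℕ) : SimpleGraph (Vt n) :=
  joinG (⊤ : SimpleGraph (Fin n)) ((⊤ : SimpleGraph (Fin 2)) ⊕g (⊥ : SimpleGraph (Fin n)))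

private lemma adj_ll {a b : Fin n} : (Gn n).Adj (Sum.inl a) (Sum.inl b) ↔ a ≠ b := by
  simp [Gn, joinG, top_adj]

private lemma adj_lr {a : Fin n} {x : Fin 2 ⊕ Fin n} :
    (Gn n).Adj (Sum.inl a) (Sum.inr x) := by
  simp [Gn, joinG]

private lemma adj_rr {x y : Fin 2 ⊕ Fin n} :
    (Gn n).Adj (Sum.inr x) (Sum.inr y) ↔
      ((⊤ : SimpleGraph (Fin 2)) ⊕g (⊥ : SimpleGraph (Fin n))).Adj x y := by
  simp [Gn, joinG]

private lemma aux (n : ℕ) : matchingCount (Gn n) (n + 1) = n.factorial := by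
  classical
  set e₀ : Sym2 (Vt n) := s(Sum.inr (Sum.inl 0), Sum.inr (Sum.inl 1)) with he₀
  set F : Equiv.Perm (Fin n) → Finset (Sym2 (Vt n)) := fun σ =>
    insert e₀ (Finset.univ.image fun j : Fin n => s(Sum.inl (σ j), Sum.inr (Sum.inr j)))
      with hF
  have hinjim : ∀ σ : Equiv.Perm (Fin n), Function.Injective
      (fun j : Fin n => (s(Sum.inl (σ j), Sum.inr (Sum.inr j)) : Sym2 (Vt n))) := by
    intro σ j j' h
    simp only [Sym2.eq, Sym2.rel_iff', Prod.mk.injEq, Prod.swap_prod_mk] at h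
    rcases h with ⟨-, h⟩ | ⟨h, -⟩ <;> simp_all
  have he₀nm : ∀ σ : Equiv.Perm (Fin n),
      e₀ ∉ Finset.univ.image fun j : Fin n => s(Sum.inl (σ j), Sum.inr (Sum.inr j)) := by
    intro σ hmem
    simp only [Finset.mem_image, Finset.mem_univ, true_and] at hmem
    obtain ⟨j, hj⟩ := hmem
    simp only [he₀, Sym2.eq, Sym2.rel_iff', Prod.mk.injEq, Prod.swap_prod_mk] at hj
    rcases hj with ⟨h, -⟩ | ⟨h, -⟩ <;> simp_all
  have hcardF : ∀ σ : Equiv.Perm (Fin n), (F σ).card = n + 1 := by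
    intro σ
    rw [hF]
    rw [Finset.card_insert_of_notMem (he₀nm σ), Finset.card_image_of_injective _ (hinjim σ),
      Finset.card_univ, Fintype.card_fin]
  have key : {s : Finset (Sym2 (Vt n)) | s.card = n + 1 ∧ ↑s ⊆ (Gn n).edgeSet ∧
      ∀ e ∈ s, ∀ f ∈ s, e ≠ f → ∀ v, v ∈ e → v ∉ f} = Set.range F := by
    ext s
    simp only [Set.mem_setOf_eq, Set.mem_range]
    constructor
    · rintro ⟨hcard, hsub, hdisj⟩
      -- every vertex is covered
      have hdisj' : ∀ e ∈ s, ∀ f ∈ s, e ≠ f → Disjoint (e2f e) (e2f f) := by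
        intro e he f hf hef
        rw [Finset.disjoint_left]
        intro v hv hv'
        exact hdisj e he f hf hef v (mem_e2f.mp hv) (mem_e2f.mp hv')
      have hcardB : (s.biUnion e2f).card = 2 * (n + 1) := by
        rw [Finset.card_biUnion hdisj']
        have : ∀ e ∈ s, (e2f e).card = 2 := by
          intro e he
          have hnd : ¬ e.IsDiag := SimpleGraph.not_isDiag_of_mem_edgeSet _ (hsub he)
          induction e using Sym2.ind with
          | _ a b =>
            rw [Sym2.mk_isDiag_iff] at hnd
            rw [e2f_mk, Finset.card_pair hnd]
        rw [Finset.sum_congr rfl this, Finset.sum_const, hcard, smul_eq_mul, Nat.mul_comm]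
      have hBuniv : s.biUnion e2f = Finset.univ := by
        apply Finset.eq_univ_of_card
        rw [hcardB]
        simp [Fintype.card_sum, Fintype.card_fin]
        ring
      have cover : ∀ v : Vt n, ∃ e ∈ s, v ∈ e := by
        intro v
        have : v ∈ s.biUnion e2f := hBuniv ▸ Finset.mem_univ v
        rw [Finset.mem_biUnion] at this
        obtain ⟨e, he, hv⟩ := this
        exact ⟨e, he, mem_e2f.mp hv⟩
      -- each right-independent vertex is matched to a left vertex
      have hA : ∀ j : Fin n, ∃ a : Fin n, s(Sum.inr (Sum.inr j), Sum.inl a) ∈ s := by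
        intro j
        obtain ⟨e, he, hv⟩ := cover (Sum.inr (Sum.inr j))
        obtain ⟨w, rfl⟩ := Sym2.mem_iff_exists.mp hv
        have hadj : (Gn n).Adj (Sum.inr (Sum.inr j)) w := (hsub he)
        match w with
        | Sum.inl a => exact ⟨a, he⟩
        | Sum.inr (Sum.inl i) => rw [adj_rr] at hadj; simp at hadj
        | Sum.inr (Sum.inr j') => rw [adj_rr] at hadj; simp at hadj
      choose f hf using hA
      have hfinj : Function.Injective f := by
        intro j j' hjj'
        by_contra hne
        have hne' : (s(Sum.inr (Sum.inr j), Sum.inl (f j)) : Sym2 (Vt n)) ≠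
            s(Sum.inr (Sum.inr j'), Sum.inl (f j')) := by
          intro hEq
          simp only [Sym2.eq, Sym2.rel_iff', Prod.mk.injEq, Prod.swap_prod_mk] at hEq
          rcases hEq with ⟨h, -⟩ | ⟨h, -⟩ <;> simp_all
        exact hdisj _ (hf j) _ (hf j') hne' (Sum.inl (f j)) (by simp [Sym2.mem_iff])
          (by simp [Sym2.mem_iff, hjj'])
      have hfbij : Function.Bijective f := Finite.injective_iff_bijective.mp hfinj
      set σ : Equiv.Perm (Fin n) := Equiv.ofBijective f hfbij with hσ
      -- the special edge belongs to s
      have he₀s : e₀ ∈ s := by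
        obtain ⟨e, he, hv⟩ := cover (Sum.inr (Sum.inl 0))
        obtain ⟨w, rfl⟩ := Sym2.mem_iff_exists.mp hv
        have hadj : (Gn n).Adj (Sum.inr (Sum.inl 0)) w := (hsub he)
        match w with
        | Sum.inl a =>
          exfalso
          obtain ⟨j, hj⟩ := hfbij.2 a
          have hne' : (s(Sum.inr (Sum.inl (0 : Fin 2)), Sum.inl a) : Sym2 (Vt n)) ≠
              s(Sum.inr (Sum.inr j), Sum.inl (f j)) := by
            intro hEq
            simp only [Sym2.eq, Sym2.rel_iff', Prod.mk.injEq, Prod.swap_prod_mk] at hEq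
            rcases hEq with ⟨h, -⟩ | ⟨h, -⟩ <;> simp at h
          exact hdisj _ he _ (hf j) hne' (Sum.inl a) (by simp [Sym2.mem_iff])
            (by simp [Sym2.mem_iff, hj])
        | Sum.inr (Sum.inl i) =>
          have hi : i ≠ 0 := by
            rw [adj_rr] at hadj
            simp only [SimpleGraph.sum_adj, top_adj] at hadj
            exact fun h => hadj (h ▸ rfl)
          have : i = 1 := by fin_cases i <;> simp_all
          rw [this] at he
          exact he
        | Sum.inr (Sum.inr j') => rw [adj_rr] at hadj; simp at hadj
      refine ⟨σ, ?_⟩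
      have hFsub : F σ ⊆ s := by
        rw [hF]
        intro e he
        rw [Finset.mem_insert] at he
        rcases he with rfl | he
        · exact he₀s
        · simp only [Finset.mem_image, Finset.mem_univ, true_and] at he
          obtain ⟨j, rfl⟩ := he
          have : σ j = f j := rfl
          rw [this, Sym2.eq_swap]
          exact hf j
      exact Finset.eq_of_subset_of_card_le hFsub (by rw [hcard, hcardF σ])
    · rintro ⟨σ, rfl⟩
      refine ⟨hcardF σ, ?_, ?_⟩
      · intro e he
        simp only [hF, Finset.coe_insert, Set.mem_insert_iff, Finset.coe_image,
          Finset.coe_univ, Set.image_univ, Set.mem_range] at he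
        rcases he with rfl | ⟨j, rfl⟩
        · rw [SimpleGraph.mem_edgeSet, he₀] at *
          rw [adj_rr]
          simp only [SimpleGraph.sum_adj, top_adj]
          decide
        · rw [SimpleGraph.mem_edgeSet]
          exact adj_lr
      · intro e he g hg hne v hv hv'
        rw [hF, Finset.mem_insert] at he hg
        rcases he with rfl | he <;> rcases hg with rfl | hg
        · exact hne rfl
        · simp only [Finset.mem_image, Finset.mem_univ, true_and] at hg
          obtain ⟨j, rfl⟩ := hg
          rw [he₀, Sym2.mem_iff] at hv
          rw [Sym2.mem_iff] at hv'
          rcases hv with rfl | rfl <;> rcases hv' with h | h <;> simp_all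
        · simp only [Finset.mem_image, Finset.mem_univ, true_and] at he
          obtain ⟨j, rfl⟩ := he
          rw [Sym2.mem_iff] at hv
          rw [he₀, Sym2.mem_iff] at hv'
          rcases hv with rfl | rfl <;> rcases hv' with h | h <;> simp_all
        · simp only [Finset.mem_image, Finset.mem_univ, true_and] at he hg
          obtain ⟨j, rfl⟩ := he
          obtain ⟨j', rfl⟩ := hg
          have hjj' : j ≠ j' := fun h => hne (by rw [h])
          rw [Sym2.mem_iff] at hv hv'
          rcases hv with rfl | rfl <;> rcases hv' with h | h
          · exact hjj' (σ.injective (by simpa using h))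
          · simp at h
          · simp at h
          · exact hjj' (by simpa using h)
  rw [matchingCount, key, ← Nat.card_coe_set_eq]
  have hFinj : Function.Injective F := by
    intro σ τ h
    refine Equiv.ext fun j => ?_
    have hj : s(Sum.inl (σ j), Sum.inr (Sum.inr j)) ∈ F τ := by
      rw [← h, hF]
      exact Finset.mem_insert_of_mem (Finset.mem_image_of_mem _ (Finset.mem_univ j))
    rw [hF, Finset.mem_insert] at hj
    rcases hj with hj | hj
    · exfalso
      rw [he₀] at hj
      simp only [Sym2.eq, Sym2.rel_iff', Prod.mk.injEq, Prod.swap_prod_mk] at hj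
      rcases hj with ⟨h1, -⟩ | ⟨h1, -⟩ <;> simp_all
    · simp only [Finset.mem_image, Finset.mem_univ, true_and] at hj
      obtain ⟨j', hj'⟩ := hj
      simp only [Sym2.eq, Sym2.rel_iff', Prod.mk.injEq, Prod.swap_prod_mk] at hj'
      rcases hj' with ⟨h1, h2⟩ | ⟨h1, h2⟩
      · obtain rfl : j' = j := by simpa using h2
        simpa using h1.symm
      · simp at h1
  rw [Nat.card_range_of_injective hFinj, Nat.card_eq_fintype_card, Fintype.card_perm,
    Fintype.card_fin]

end Aux

/-- For every `k ≥ 2`, the number of copies of `M_k` in `K_{k-1} + (K₂ ∪ I_{k-1})` equals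
`(k-1)!`. -/
theorem stmt_17 (k : ℕ) (hk : 2 ≤ k) :
    matchingCount
      (joinG (⊤ : SimpleGraph (Fin (k - 1)))
        ((⊤ : SimpleGraph (Fin 2)) ⊕g (⊥ : SimpleGraph (Fin (k - 1))))) k =
      (k - 1).factorial := by
  have hk' : k = (k - 1) + 1 := by omega
  rw [hk']
  exact aux (k - 1)
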